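/- arXiv:2505.03404 — 5 statements merged into one kernel-verified Lean document; each statement's English description precedes it below -/
import Mathlib

section
/- Let V be a vector space with nondegenerate symmetric bilinear form B, δ : V → V with δ² = 0 and B(ω,δη) = B(δω,η) for all ω,η, L = im(δ), and C a complement of L (V = L ⊕ C). If C is isotropic with respect to B, then the restriction δ|_C : C → L is bijective. -/
/-- If `C` is an isotropic complement of `L = im δ` for a symmetric square-zero `δ`
with respect to a nondegenerate bilinear form, then `δ|_C : C → L` is bijective. -/
theorem bijective_restrict_of_isotropic_compl
    {V : Type*} [AddCommGroup V] [Module ℂ V]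
    (B : V →ₗ[ℂ] V →ₗ[ℂ] ℂ)
    (hB : ∀ x : V, (∀ y : V, B x y = 0) → x = 0)
    (δ : V →ₗ[ℂ] V)
    (hδ2 : δ ∘ₗ δ = 0)
    (hsymm : ∀ ω η : V, B ω (δ η) = B (δ ω) η)
    (C : Submodule ℂ V)
    (hcompl : IsCompl (LinearMap.range δ) C)
    (hiso : ∀ ω ∈ C, ∀ η ∈ C, B ω η = 0) :
    Function.Bijective
      (fun c : C => (⟨δ c, LinearMap.mem_range.mpr ⟨c, rfl⟩⟩ : LinearMap.range δ)) := by
  have hsup : ∀ y : V, ∃ u c, c ∈ C ∧ δ u + c = y := by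
    intro y
    have : y ∈ LinearMap.range δ ⊔ C := by
      rw [hcompl.sup_eq_top]; trivial
    obtain ⟨l, hl, c, hc, h⟩ := Submodule.mem_sup.mp this
    obtain ⟨u, rfl⟩ := hl
    exact ⟨u, c, hc, h⟩
  constructor
  · intro ⟨a, ha⟩ ⟨b, hb⟩ h
    have h' : δ (a - b) = 0 := by
      simp only [Subtype.mk.injEq] at h
      simp [map_sub, h]
    have key : a - b = 0 := by
      apply hB
      intro y
      obtain ⟨u, c, hc, rfl⟩ := hsup y
      have h1 : B (a - b) (δ u) = 0 := by rw [hsymm, h']; simp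
      have h2 : B (a - b) c = 0 := hiso _ (sub_mem ha hb) _ hc
      rw [map_add, h1, h2, add_zero]
    ext
    simpa [sub_eq_zero] using key
  · intro ⟨y, hy⟩
    obtain ⟨v, rfl⟩ := hy
    obtain ⟨u, c, hc, hvc⟩ := hsup v
    refine ⟨⟨c, hc⟩, ?_⟩
    have : δ (δ u) = 0 := congrFun (congrArg DFunLike.coe hδ2) u
    apply Subtype.ext; show δ c = δ v
    rw [← hvc, map_add, this, zero_add]
end

section
/- Let V = ⊕_{k=0}^n V^k be a finite-dimensional graded vector space, d : V^k → V^{k+1} with d² = 0, δ : V^k → V^{k−1} with δ² = 0, D = δd + dδ, and suppose ker(δ) = im(δ) (acyclicity) and V = im(δ) ⊕ C for a D-invariant complement C. Then for each k, tr(e^{−tD} restricted to im(δ) ∩ V^k) = tr(e^{−tD} restricted to C ∩ V^{k+1}). -/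
open NormedSpace

section AuxConj

variable {M N : Type} [NormedAddCommGroup M] [NormedSpace ℂ M] [FiniteDimensional ℂ M]
  [NormedAddCommGroup N] [NormedSpace ℂ N] [FiniteDimensional ℂ N]

/-- Conjugation by a continuous linear equivalence, as a ring hom on endomorphisms. -/
def conjRH (e : M ≃L[ℂ] N) : (M →L[ℂ] M) →+* (N →L[ℂ] N) where
  toFun A := (e : M →L[ℂ] N).comp (A.comp (e.symm : N →L[ℂ] M))
  map_one' := by ext x; simp
  map_mul' A B := by ext x; simp
  map_zero' := by ext x; simp
  map_add' A B := by ext x; simp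

set_option linter.unusedSectionVars false in
lemma conjRH_continuous (e : M ≃L[ℂ] N) : Continuous (conjRH e) := by
  have : FiniteDimensional ℂ (M →L[ℂ] M) :=
    (LinearMap.toContinuousLinearMap : (M →ₗ[ℂ] M) ≃ₗ[ℂ] (M →L[ℂ] M)).finiteDimensional
  let f : (M →L[ℂ] M) →ₗ[ℂ] (N →L[ℂ] N) :=
    { toFun := conjRH e
      map_add' := (conjRH e).map_add
      map_smul' := by intro c A; ext x; simp [conjRH] }
  exact f.continuous_of_finiteDimensional

set_option linter.unusedSectionVars false in
lemma conjRH_smul (e : M ≃L[ℂ] N) (c : ℂ) (A : M →L[ℂ] M) :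
    conjRH e (c • A) = c • conjRH e A := by
  ext x; simp [conjRH]

lemma trace_exp_conj (e : M ≃L[ℂ] N) (A : M →L[ℂ] M) (B : N →L[ℂ] N)
    (h : B = conjRH e A) :
    LinearMap.trace ℂ N (exp B).toLinearMap = LinearMap.trace ℂ M (exp A).toLinearMap := by
  subst h
  letI : NormedAlgebra ℚ (M →L[ℂ] M) := .restrictScalars ℚ ℂ _
  letI : NormedAlgebra ℚ (N →L[ℂ] N) := .restrictScalars ℚ ℂ _
  rw [← map_exp (conjRH e) (conjRH_continuous e) A]
  have : ((conjRH e) (exp A)).toLinearMap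
      = (e.toLinearEquiv).conj (exp A).toLinearMap := by
    ext x; simp [conjRH, LinearEquiv.conj_apply]
  rw [this, LinearMap.trace_conj']

end AuxConj

/-- For a finite-dimensional graded vector space `V = ⊕_{k=0}^n V^k` (encoded as a family
of spaces `V k`, trivial for `k > n`) with `d` of degree `+1`, `δ` of degree `−1`,
`d² = δ² = 0`, `D = [δ, d] = δd + dδ`, an acyclic `δ`-complex (`ker δ = im δ`) and a
`D`-invariant complement `C` of `im δ` (so `V^k = (im δ ∩ V^k) ⊕ C^k`), the traces of the
heat operator restricted to `im(δ) ∩ V^k` and to `C ∩ V^{k+1}` agree: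
`tr(e^{−tD}|_{im(δ)∩V^k}) = tr(e^{−tD}|_{C∩V^{k+1}})`.  The subspaces `im(δ) ∩ V^k` and
`C^k` are presented as spaces `L k`, `C k` together with injective embeddings into `V k`
with the correct ranges, and the restricted operators `DL k`, `DC k` are the restrictions
of `D`, i.e. they intertwine the embeddings with `D`. -/
theorem restricted_heat_trace_shift
    (V : ℕ → Type) [∀ k, NormedAddCommGroup (V k)] [∀ k, NormedSpace ℂ (V k)]
    [∀ k, FiniteDimensional ℂ (V k)]
    (n : ℕ) (hV : ∀ k, n < k → Subsingleton (V k))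
    (d : ∀ k, V k →L[ℂ] V (k + 1)) (δ : ∀ k, V (k + 1) →L[ℂ] V k)
    (hd2 : ∀ k, (d (k + 1)).comp (d k) = 0)
    (hδ2 : ∀ k, (δ k).comp (δ (k + 1)) = 0)
    (D : ∀ k, V k →L[ℂ] V k)
    (hD0 : D 0 = (δ 0).comp (d 0))
    (hDsucc : ∀ k, D (k + 1) = (δ (k + 1)).comp (d (k + 1)) + (d k).comp (δ k))
    -- acyclicity of the `δ`-complex: `ker δ = im δ`
    (hacyc : ∀ k, LinearMap.ker (δ k : V (k + 1) →ₗ[ℂ] V k) = LinearMap.range (δ (k + 1) : V (k + 1 + 1) →ₗ[ℂ] V (k + 1)))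
    (hsurj : LinearMap.range (δ 0 : V (0 + 1) →ₗ[ℂ] V 0) = ⊤)
    -- `L k` is the subspace `im(δ) ∩ V^k`, embedded in `V k`
    (L : ℕ → Type) [∀ k, NormedAddCommGroup (L k)] [∀ k, NormedSpace ℂ (L k)]
    [∀ k, FiniteDimensional ℂ (L k)]
    (ιL : ∀ k, L k →L[ℂ] V k)
    (hιLinj : ∀ k, Function.Injective (ιL k))
    (hιLrange : ∀ k, LinearMap.range (ιL k : L k →ₗ[ℂ] V k) = LinearMap.range (δ k : V (k + 1) →ₗ[ℂ] V k))
    -- `C k` is a complement of `im(δ) ∩ V^k` in `V^k`, invariant under `D`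
    (C : ℕ → Type) [∀ k, NormedAddCommGroup (C k)] [∀ k, NormedSpace ℂ (C k)]
    [∀ k, FiniteDimensional ℂ (C k)]
    (ιC : ∀ k, C k →L[ℂ] V k)
    (hιCinj : ∀ k, Function.Injective (ιC k))
    (hcompl : ∀ k, IsCompl (LinearMap.range (δ k : V (k + 1) →ₗ[ℂ] V k)) (LinearMap.range (ιC k : C k →ₗ[ℂ] V k)))
    -- `DL`, `DC` are the restrictions of `D` to the two subspaces
    (DL : ∀ k, L k →L[ℂ] L k)
    (hDL : ∀ k, (ιL k).comp (DL k) = (D k).comp (ιL k))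
    (DC : ∀ k, C k →L[ℂ] C k)
    (hDC : ∀ k, (ιC k).comp (DC k) = (D k).comp (ιC k))
    (t : ℝ) (k : ℕ) :
    LinearMap.trace ℂ (L k) (exp ((-(t : ℂ)) • DL k)).toLinearMap
      = LinearMap.trace ℂ (C (k + 1)) (exp ((-(t : ℂ)) • DC (k + 1))).toLinearMap := by
  classical
  -- the map ψ : C (k+1) → L k induced by δ
  have hmem : ∀ c : C (k + 1), δ k (ιC (k + 1) c) ∈ LinearMap.range (ιL k : L k →ₗ[ℂ] V k) := by
    intro c
    rw [hιLrange]
    exact ⟨ιC (k + 1) c, rfl⟩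
  let eL : L k ≃ₗ[ℂ] LinearMap.range ((ιL k) : L k →ₗ[ℂ] V k) :=
    LinearEquiv.ofInjective ((ιL k) : L k →ₗ[ℂ] V k) (hιLinj k)
  let F : C (k + 1) →ₗ[ℂ] LinearMap.range ((ιL k) : L k →ₗ[ℂ] V k) :=
    LinearMap.codRestrict _ (((δ k).comp (ιC (k + 1))) : C (k + 1) →ₗ[ℂ] V k) hmem
  let ψ : C (k + 1) →ₗ[ℂ] L k := eL.symm.toLinearMap ∘ₗ F
  have hψ : ∀ c, ιL k (ψ c) = δ k (ιC (k + 1) c) := by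
    intro c
    have h1 : eL (eL.symm (F c)) = F c := eL.apply_symm_apply _
    have h2 : (eL (eL.symm (F c)) : V k) = ιL k (eL.symm (F c)) :=
      LinearEquiv.ofInjective_apply _ _
    have : (F c : V k) = δ k (ιC (k + 1) c) := rfl
    rw [← this, ← h1, h2]
    rfl
  -- ψ is injective
  have hψinj : Function.Injective ψ := by
    intro c₁ c₂ hcc
    have hδ0 : δ k (ιC (k + 1) (c₁ - c₂)) = 0 := by
      have := congrArg (ιL k) hcc
      rw [hψ, hψ] at this
      simp [map_sub, this]
    have hker : ιC (k + 1) (c₁ - c₂) ∈ LinearMap.ker (δ k : V (k + 1) →ₗ[ℂ] V k) := hδ0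
    rw [hacyc k] at hker
    have hmemC : ιC (k + 1) (c₁ - c₂) ∈ LinearMap.range (ιC (k + 1) : C (k + 1) →ₗ[ℂ] V (k + 1)) := ⟨c₁ - c₂, rfl⟩
    have : ιC (k + 1) (c₁ - c₂) = 0 := by
      have hd := (hcompl (k + 1)).disjoint
      exact (Submodule.disjoint_def.mp hd) _ hker hmemC
    have := hιCinj (k + 1) (by simpa using this : ιC (k + 1) (c₁ - c₂) = ιC (k + 1) 0)
    exact sub_eq_zero.mp this
  -- ψ is surjective
  have hψsurj : Function.Surjective ψ := by
    intro l
    have : ιL k l ∈ LinearMap.range (δ k : V (k + 1) →ₗ[ℂ] V k) := by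
      rw [← hιLrange]; exact ⟨l, rfl⟩
    obtain ⟨x, hx⟩ := this
    have hxtop : x ∈ LinearMap.range (δ (k + 1) : V (k + 1 + 1) →ₗ[ℂ] V (k + 1)) ⊔ LinearMap.range (ιC (k + 1) : C (k + 1) →ₗ[ℂ] V (k + 1)) := by
      rw [(hcompl (k + 1)).sup_eq_top]; trivial
    obtain ⟨a, ha, b, hb, hab⟩ := Submodule.mem_sup.mp hxtop
    obtain ⟨a', rfl⟩ := ha
    obtain ⟨c, rfl⟩ := hb
    refine ⟨c, hιLinj k ?_⟩
    rw [hψ]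
    have hδa : δ k (δ (k + 1) a') = 0 := by
      have := ContinuousLinearMap.ext_iff.mp (hδ2 k) a'
      simpa using this
    calc δ k (ιC (k + 1) c) = δ k (δ (k + 1) a' + ιC (k + 1) c) := by
          rw [map_add, hδa, zero_add]
      _ = δ k x := congrArg (δ k) hab
      _ = ιL k l := hx
  -- commutation δ D = D δ
  have hcomm : ∀ x, δ k (D (k + 1) x) = D k (δ k x) := by
    intro x
    have hδ2' : ∀ m y, δ m (δ (m + 1) y) = 0 := by
      intro m y
      have := ContinuousLinearMap.ext_iff.mp (hδ2 m) y
      simpa using this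
    cases k with
    | zero =>
      rw [hDsucc 0, hD0]
      simp [ContinuousLinearMap.add_apply, hδ2' 0]
    | succ m =>
      rw [hDsucc (m + 1), hDsucc m]
      simp [ContinuousLinearMap.add_apply, hδ2' m, hδ2' (m + 1)]
  -- ψ intertwines DC and DL
  have hint : ∀ c, ψ (DC (k + 1) c) = DL k (ψ c) := by
    intro c
    apply hιLinj k
    have h1 : ιL k (ψ (DC (k + 1) c)) = δ k (ιC (k + 1) (DC (k + 1) c)) := hψ _
    have h2 : ιC (k + 1) (DC (k + 1) c) = D (k + 1) (ιC (k + 1) c) :=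
      ContinuousLinearMap.ext_iff.mp (hDC (k + 1)) c
    have h3 : ιL k (DL k (ψ c)) = D k (ιL k (ψ c)) :=
      ContinuousLinearMap.ext_iff.mp (hDL k) (ψ c)
    rw [h1, h2, hcomm, h3, hψ]
  -- the continuous linear equivalence
  let e' : C (k + 1) ≃ₗ[ℂ] L k := LinearEquiv.ofBijective ψ ⟨hψinj, hψsurj⟩
  let e : C (k + 1) ≃L[ℂ] L k := e'.toContinuousLinearEquiv
  have hDLconj : DL k = conjRH e (DC (k + 1)) := by
    ext l
    obtain ⟨c, rfl⟩ := hψsurj l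
    have hec : e c = ψ c := rfl
    have hsymm : e.symm (ψ c) = c := by
      apply hψinj
      have : ψ (e.symm (ψ c)) = e (e.symm (ψ c)) := rfl
      rw [this, e.apply_symm_apply]
    simp only [conjRH, RingHom.coe_mk, MonoidHom.coe_mk, OneHom.coe_mk,
      ContinuousLinearMap.comp_apply, ContinuousLinearEquiv.coe_coe]
    rw [hsymm, ← hint]
    rfl
  apply trace_exp_conj e
  rw [conjRH_smul, hDLconj]
end

section
/- Under the hypotheses of the previous setup (finite-dimensional graded V, d² = δ² = 0, D = [δ,d], ker δ = im δ, V = im(δ) ⊕ C with C graded and D-invariant), the restricted supertrace satisfies: Σ_{k=0}^n (−1)^k tr(e^{−tD}|_{im(δ)∩V^k}) = Σ_{k=0}^n (−1)^{k+1} k · tr(e^{−tD}|_{V^k}). -/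
open NormedSpace

/-- If `ι` intertwines `A` and `B`, it intertwines their exponentials. -/
lemma aux_comm_exp {E F : Type} [NormedAddCommGroup E] [NormedSpace ℂ E] [CompleteSpace E]
    [NormedAddCommGroup F] [NormedSpace ℂ F] [CompleteSpace F]
    (ι : E →L[ℂ] F) (A : E →L[ℂ] E) (B : F →L[ℂ] F)
    (h : ι.comp A = B.comp ι) :
    ι.comp (exp A) = (exp B).comp ι := by
  have hpow : ∀ m : ℕ, ι.comp (A ^ m) = (B ^ m).comp ι := by
    intro m
    induction m with
    | zero => simp [ContinuousLinearMap.one_def]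
    | succ m ih =>
      rw [pow_succ, pow_succ, ContinuousLinearMap.mul_def, ContinuousLinearMap.mul_def,
        ← ContinuousLinearMap.comp_assoc, ih, ContinuousLinearMap.comp_assoc, h,
        ← ContinuousLinearMap.comp_assoc]
  have hs : Summable fun m : ℕ => ((Nat.factorial m : ℂ))⁻¹ • A ^ m := expSeries_summable' A
  rw [exp_eq_tsum ℂ, exp_eq_tsum ℂ]
  have h1 : ι.comp (∑' m : ℕ, ((Nat.factorial m : ℂ))⁻¹ • A ^ m)
      = ∑' m : ℕ, ι.comp (((Nat.factorial m : ℂ))⁻¹ • A ^ m) := by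
    have := (ContinuousLinearMap.compL ℂ E E F ι).map_tsum hs
    simpa only [ContinuousLinearMap.compL_apply] using this
  rw [h1]
  have h2 : (∑' m : ℕ, ((Nat.factorial m : ℂ))⁻¹ • B ^ m).comp ι
      = ∑' m : ℕ, (((Nat.factorial m : ℂ))⁻¹ • B ^ m).comp ι := by
    have := ((ContinuousLinearMap.compL ℂ E F F).flip ι).map_tsum (expSeries_summable' (𝕂 := ℂ) B)
    simpa only [ContinuousLinearMap.flip_apply, ContinuousLinearMap.compL_apply] using this
  rw [h2]
  congr 1
  funext m
  rw [ContinuousLinearMap.comp_smul, hpow m, ContinuousLinearMap.smul_comp]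

/-- Traces agree across a bijective intertwiner. -/
lemma aux_trace_eq_of_intertwine {A B : Type} [AddCommGroup A] [Module ℂ A]
    [AddCommGroup B] [Module ℂ B]
    (ψ : A →ₗ[ℂ] B) (hbij : Function.Bijective ψ)
    (S : A →ₗ[ℂ] A) (T : B →ₗ[ℂ] B) (h : ψ.comp S = T.comp ψ) :
    LinearMap.trace ℂ A S = LinearMap.trace ℂ B T := by
  let e := LinearEquiv.ofBijective ψ hbij
  have he : e.conj S = T := by
    ext z
    obtain ⟨y, rfl⟩ := hbij.2 z
    have h1 : e.symm (ψ y) = y := by simpa [e] using e.symm_apply_apply y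
    rw [LinearEquiv.conj_apply]
    simp only [LinearMap.comp_apply, LinearEquiv.coe_coe, h1, e, LinearEquiv.ofBijective_apply]
    exact LinearMap.congr_fun h y
  rw [← he, LinearMap.trace_conj']

/-- Trace splits across a direct-sum decomposition into invariant subspaces. -/
lemma aux_trace_add_of_compl {E A B : Type} [AddCommGroup E] [Module ℂ E]
    [AddCommGroup A] [Module ℂ A] [Module.Finite ℂ A]
    [AddCommGroup B] [Module ℂ B] [Module.Finite ℂ B]
    (ιA : A →ₗ[ℂ] E) (ιB : B →ₗ[ℂ] E)
    (hA : Function.Injective ιA) (hB : Function.Injective ιB)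
    (hc : IsCompl (LinearMap.range ιA) (LinearMap.range ιB))
    (T : E →ₗ[ℂ] E) (TA : A →ₗ[ℂ] A) (TB : B →ₗ[ℂ] B)
    (hTA : ιA.comp TA = T.comp ιA) (hTB : ιB.comp TB = T.comp ιB) :
    LinearMap.trace ℂ E T = LinearMap.trace ℂ A TA + LinearMap.trace ℂ B TB := by
  rw [← LinearMap.trace_prodMap']
  refine (aux_trace_eq_of_intertwine (ιA.coprod ιB) ?_ (TA.prodMap TB) T ?_).symm
  · constructor
    · intro x y hxy
      obtain ⟨x1, x2⟩ := x; obtain ⟨y1, y2⟩ := y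
      simp only [LinearMap.coprod_apply] at hxy
      have hmem : ιA (x1 - y1) ∈ LinearMap.range ιA ⊓ LinearMap.range ιB := by
        constructor
        · exact ⟨x1 - y1, rfl⟩
        · refine ⟨y2 - x2, ?_⟩
          simp only [map_sub]
          linear_combination (norm := abel) hxy.symm
      rw [hc.inf_eq_bot] at hmem
      have h1 : x1 = y1 := by
        apply hA
        have : ιA (x1 - y1) = 0 := hmem
        rw [map_sub, sub_eq_zero] at this
        exact this
      subst h1
      have h2 : x2 = y2 := hB (add_left_cancel hxy)
      simp [h2]
    · rw [← LinearMap.range_eq_top, LinearMap.range_coprod, hc.sup_eq_top]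
  · apply LinearMap.ext
    rintro ⟨x, y⟩
    simp only [LinearMap.comp_apply, LinearMap.prodMap_apply, LinearMap.coprod_apply,
      Prod.map_fst, Prod.map_snd]
    have h1 := LinearMap.congr_fun hTA x
    have h2 := LinearMap.congr_fun hTB y
    simp only [LinearMap.comp_apply] at h1 h2
    rw [h1, h2, ← map_add]

/-- The combinatorial identity for the sums. -/
lemma aux_sum_helper (n : ℕ) (a c : ℕ → ℂ) (h0 : c 0 = 0) (hc : ∀ k, c (k + 1) = a k)
    (han : a n = 0) :
    ∑ k ∈ Finset.range (n + 1), (-1 : ℂ) ^ k * a k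
      = ∑ k ∈ Finset.range (n + 1), (-1 : ℂ) ^ (k + 1) * (k : ℂ) * (a k + c k) := by
  have h1 : ∑ k ∈ Finset.range (n + 1), (-1 : ℂ) ^ (k + 1) * (k : ℂ) * c k
      = ∑ k ∈ Finset.range (n + 1), (-1 : ℂ) ^ k * ((k : ℂ) + 1) * a k := by
    rw [Finset.sum_range_succ' (fun k => (-1 : ℂ) ^ (k + 1) * (k : ℂ) * c k) n,
      Finset.sum_range_succ (fun k => (-1 : ℂ) ^ k * ((k : ℂ) + 1) * a k) n]
    simp only [h0, hc, han, Nat.cast_zero, mul_zero, add_zero, Nat.cast_add, Nat.cast_one]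
    apply Finset.sum_congr rfl
    intro k _
    ring
  symm
  calc ∑ k ∈ Finset.range (n + 1), (-1 : ℂ) ^ (k + 1) * (k : ℂ) * (a k + c k)
      = ∑ k ∈ Finset.range (n + 1),
          ((-1 : ℂ) ^ (k + 1) * (k : ℂ) * a k + (-1 : ℂ) ^ (k + 1) * (k : ℂ) * c k) := by
        apply Finset.sum_congr rfl; intro k _; ring
    _ = (∑ k ∈ Finset.range (n + 1), (-1 : ℂ) ^ (k + 1) * (k : ℂ) * a k)
          + ∑ k ∈ Finset.range (n + 1), (-1 : ℂ) ^ (k + 1) * (k : ℂ) * c k :=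
        Finset.sum_add_distrib
    _ = (∑ k ∈ Finset.range (n + 1), (-1 : ℂ) ^ (k + 1) * (k : ℂ) * a k)
          + ∑ k ∈ Finset.range (n + 1), (-1 : ℂ) ^ k * ((k : ℂ) + 1) * a k := by rw [h1]
    _ = ∑ k ∈ Finset.range (n + 1),
          ((-1 : ℂ) ^ (k + 1) * (k : ℂ) * a k + (-1 : ℂ) ^ k * ((k : ℂ) + 1) * a k) :=
        Finset.sum_add_distrib.symm
    _ = ∑ k ∈ Finset.range (n + 1), (-1 : ℂ) ^ k * a k := by
        apply Finset.sum_congr rfl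
        intro k _
        rw [pow_succ]
        ring

set_option maxHeartbeats 1000000

/-- Restricted supertrace formula: under the hypotheses of the graded setup
(finite-dimensional graded `V`, `d² = δ² = 0`, `D = [δ,d]`, `ker δ = im δ`,
`V = im(δ) ⊕ C` with `C` graded and `D`-invariant), the supertrace of the heat operator
restricted to `L = im δ` satisfies
`Σ_{k=0}^n (−1)^k tr(e^{−tD}|_{im(δ)∩V^k}) = Σ_{k=0}^n (−1)^{k+1} k · tr(e^{−tD}|_{V^k})`. -/
theorem restricted_supertrace_formula
    (V : ℕ → Type) [∀ k, NormedAddCommGroup (V k)] [∀ k, NormedSpace ℂ (V k)]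
    [∀ k, FiniteDimensional ℂ (V k)]
    (n : ℕ) (hV : ∀ k, n < k → Subsingleton (V k))
    (d : ∀ k, V k →L[ℂ] V (k + 1)) (δ : ∀ k, V (k + 1) →L[ℂ] V k)
    (hd2 : ∀ k, (d (k + 1)).comp (d k) = 0)
    (hδ2 : ∀ k, (δ k).comp (δ (k + 1)) = 0)
    (D : ∀ k, V k →L[ℂ] V k)
    (hD0 : D 0 = (δ 0).comp (d 0))
    (hDsucc : ∀ k, D (k + 1) = (δ (k + 1)).comp (d (k + 1)) + (d k).comp (δ k))
    -- acyclicity of the `δ`-complex: `ker δ = im δ`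
    (hacyc : ∀ k, LinearMap.ker (δ k : V (k + 1) →ₗ[ℂ] V k) = LinearMap.range (δ (k + 1) : V (k + 1 + 1) →ₗ[ℂ] V (k + 1)))
    (hsurj : LinearMap.range (δ 0 : V (0 + 1) →ₗ[ℂ] V 0) = ⊤)
    -- `L k` is the subspace `im(δ) ∩ V^k`, embedded in `V k`
    (L : ℕ → Type) [∀ k, NormedAddCommGroup (L k)] [∀ k, NormedSpace ℂ (L k)]
    [∀ k, FiniteDimensional ℂ (L k)]
    (ιL : ∀ k, L k →L[ℂ] V k)
    (hιLinj : ∀ k, Function.Injective (ιL k))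
    (hιLrange : ∀ k, LinearMap.range (ιL k : L k →ₗ[ℂ] V k) = LinearMap.range (δ k : V (k + 1) →ₗ[ℂ] V k))
    -- `C k` is a complement of `im(δ) ∩ V^k` in `V^k`, invariant under `D`
    (C : ℕ → Type) [∀ k, NormedAddCommGroup (C k)] [∀ k, NormedSpace ℂ (C k)]
    [∀ k, FiniteDimensional ℂ (C k)]
    (ιC : ∀ k, C k →L[ℂ] V k)
    (hιCinj : ∀ k, Function.Injective (ιC k))
    (hcompl : ∀ k, IsCompl (LinearMap.range (δ k : V (k + 1) →ₗ[ℂ] V k)) (LinearMap.range (ιC k : C k →ₗ[ℂ] V k)))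
    -- `DL`, `DC` are the restrictions of `D` to the two subspaces
    (DL : ∀ k, L k →L[ℂ] L k)
    (hDL : ∀ k, (ιL k).comp (DL k) = (D k).comp (ιL k))
    (DC : ∀ k, C k →L[ℂ] C k)
    (hDC : ∀ k, (ιC k).comp (DC k) = (D k).comp (ιC k))
    (t : ℝ) :
    ∑ k ∈ Finset.range (n + 1),
        (-1 : ℂ) ^ k * LinearMap.trace ℂ (L k) (exp ((-(t : ℂ)) • DL k)).toLinearMap
      = ∑ k ∈ Finset.range (n + 1),
          (-1 : ℂ) ^ (k + 1) * (k : ℂ) *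
            LinearMap.trace ℂ (V k) (exp ((-(t : ℂ)) • D k)).toLinearMap := by
  -- trace of any endomorphism of a subsingleton space vanishes
  have trace_zero : ∀ (M : Type) [AddCommGroup M] [Module ℂ M] [Subsingleton M]
      (f : M →ₗ[ℂ] M), LinearMap.trace ℂ M f = 0 := by
    intro M _ _ _ f
    rw [Subsingleton.elim f 0, map_zero]
  -- D commutes with δ
  have hz : ∀ (j : ℕ) (x : V (j + 2)), δ j (δ (j + 1) x) = 0 := by
    intro j x
    have := ContinuousLinearMap.ext_iff.1 (hδ2 j) x
    simpa using this
  have hδD : ∀ k, (δ k).comp (D (k + 1)) = (D k).comp (δ k) := by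
    intro k
    cases k with
    | zero =>
      ext x
      simp only [hD0, hDsucc 0, ContinuousLinearMap.comp_apply,
        ContinuousLinearMap.add_apply, map_add]
      rw [hz 0 (d 1 x), zero_add]
    | succ m =>
      ext x
      simp only [hDsucc m, hDsucc (m + 1), ContinuousLinearMap.comp_apply,
        ContinuousLinearMap.add_apply, map_add]
      rw [hz (m + 1) (d (m + 2) x), hz m x, map_zero, zero_add, add_zero]
  -- exponential intertwining relations
  have hexpL : ∀ k, (ιL k).comp (exp ((-(t : ℂ)) • DL k))
      = (exp ((-(t : ℂ)) • D k)).comp (ιL k) := by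
    intro k
    exact aux_comm_exp _ _ _
      (by rw [ContinuousLinearMap.comp_smul, ContinuousLinearMap.smul_comp, hDL k])
  have hexpC : ∀ k, (ιC k).comp (exp ((-(t : ℂ)) • DC k))
      = (exp ((-(t : ℂ)) • D k)).comp (ιC k) := by
    intro k
    exact aux_comm_exp _ _ _
      (by rw [ContinuousLinearMap.comp_smul, ContinuousLinearMap.smul_comp, hDC k])
  have hexpδ : ∀ k, (δ k).comp (exp ((-(t : ℂ)) • D (k + 1)))
      = (exp ((-(t : ℂ)) • D k)).comp (δ k) := by
    intro k
    exact aux_comm_exp _ _ _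
      (by rw [ContinuousLinearMap.comp_smul, ContinuousLinearMap.smul_comp, hδD k])
  -- splitting of the trace on V k
  have hsplit : ∀ k, LinearMap.trace ℂ (V k) (exp ((-(t : ℂ)) • D k)).toLinearMap
      = LinearMap.trace ℂ (L k) (exp ((-(t : ℂ)) • DL k)).toLinearMap
        + LinearMap.trace ℂ (C k) (exp ((-(t : ℂ)) • DC k)).toLinearMap := by
    intro k
    refine aux_trace_add_of_compl ((ιL k : L k →ₗ[ℂ] V k)) ((ιC k : C k →ₗ[ℂ] V k))
      (hιLinj k) (hιCinj k) ?_ _ _ _ ?_ ?_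
    · rw [hιLrange k]; exact hcompl k
    · have := congrArg ContinuousLinearMap.toLinearMap (hexpL k)
      simpa using this
    · have := congrArg ContinuousLinearMap.toLinearMap (hexpC k)
      simpa using this
  -- C 0 is trivial
  haveI hC0 : Subsingleton (C 0) := by
    have hd0 : Disjoint (LinearMap.range (δ 0 : V (0 + 1) →ₗ[ℂ] V 0)) (LinearMap.range (ιC 0 : C 0 →ₗ[ℂ] V 0)) := (hcompl 0).disjoint
    rw [hsurj] at hd0
    have hbot : LinearMap.range (ιC 0 : C 0 →ₗ[ℂ] V 0) = ⊥ := by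
      have := hd0.symm
      rwa [disjoint_top] at this
    have hzc : ∀ x : C 0, ιC 0 x = 0 := by
      intro x
      have hx : ιC 0 x ∈ LinearMap.range (ιC 0 : C 0 →ₗ[ℂ] V 0) := ⟨x, rfl⟩
      rw [hbot] at hx
      simpa using hx
    exact ⟨fun x y => hιCinj 0 (by rw [hzc x, hzc y])⟩
  -- L n is trivial
  haveI hLn : Subsingleton (L n) := by
    have hVs : Subsingleton (V (n + 1)) := hV (n + 1) (Nat.lt_succ_self n)
    have hzl : ∀ x : L n, ιL n x = 0 := by
      intro x
      have hx : ιL n x ∈ LinearMap.range (δ n : V (n + 1) →ₗ[ℂ] V n) := by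
        rw [← hιLrange n]; exact ⟨x, rfl⟩
      obtain ⟨y, hy⟩ := hx
      rw [← hy, Subsingleton.elim y 0]
      simp
    exact ⟨fun x y => hιLinj n (by rw [hzl x, hzl y])⟩
  -- the shift identity : trace on C (k+1) equals trace on L k
  have hshift : ∀ k, LinearMap.trace ℂ (C (k + 1)) (exp ((-(t : ℂ)) • DC (k + 1))).toLinearMap
      = LinearMap.trace ℂ (L k) (exp ((-(t : ℂ)) • DL k)).toLinearMap := by
    intro k
    have hsub : ∀ x : C (k + 1), δ k (ιC (k + 1) x) ∈ LinearMap.range (ιL k : L k →ₗ[ℂ] V k) := by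
      intro x; rw [hιLrange k]; exact ⟨ιC (k + 1) x, rfl⟩
    let eL := LinearEquiv.ofInjective (ιL k : L k →ₗ[ℂ] V k) (hιLinj k)
    let ψ' : C (k + 1) →ₗ[ℂ] LinearMap.range (ιL k : L k →ₗ[ℂ] V k) :=
      LinearMap.codRestrict _
        (((δ k : V (k + 1) →ₗ[ℂ] V k)).comp ((ιC (k + 1) : C (k + 1) →ₗ[ℂ] V (k + 1)))) hsub
    let ψ : C (k + 1) →ₗ[ℂ] L k := (eL.symm : _ →ₗ[ℂ] L k).comp ψ'
    have hψ : ∀ x, ιL k (ψ x) = δ k (ιC (k + 1) x) := by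
      intro x
      have h1 : eL (eL.symm (ψ' x)) = ψ' x := eL.apply_symm_apply _
      have h2 := congrArg Subtype.val h1
      rw [LinearEquiv.ofInjective_apply] at h2
      simpa [ψ, ψ'] using h2
    have hinj : Function.Injective ψ := by
      intro x y hxy
      have h1 : δ k (ιC (k + 1) (x - y)) = 0 := by
        rw [map_sub, map_sub, ← hψ x, ← hψ y, hxy, sub_self]
      have hmem1 : ιC (k + 1) (x - y) ∈ LinearMap.range (δ (k + 1) : V ((k + 1) + 1) →ₗ[ℂ] V (k + 1)) := by
        rw [← hacyc k]
        exact LinearMap.mem_ker.mpr h1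
      have hmem2 : ιC (k + 1) (x - y) ∈ LinearMap.range (ιC (k + 1) : C (k + 1) →ₗ[ℂ] V (k + 1)) := ⟨x - y, rfl⟩
      have h3 := Submodule.disjoint_def.mp (hcompl (k + 1)).disjoint _ hmem1 hmem2
      have h4 : x - y = 0 := hιCinj (k + 1) (by rw [h3, map_zero])
      exact sub_eq_zero.mp h4
    have hsurjψ : Function.Surjective ψ := by
      intro z
      have hx : ιL k z ∈ LinearMap.range (δ k : V (k + 1) →ₗ[ℂ] V k) := by
        rw [← hιLrange k]; exact ⟨z, rfl⟩
      obtain ⟨w, hw⟩ := hx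
      have hw2 : w ∈ LinearMap.range (δ (k + 1) : V ((k + 1) + 1) →ₗ[ℂ] V (k + 1)) ⊔ LinearMap.range (ιC (k + 1) : C (k + 1) →ₗ[ℂ] V (k + 1)) := by
        rw [(hcompl (k + 1)).sup_eq_top]; trivial
      obtain ⟨u, hu, v, hv, rfl⟩ := Submodule.mem_sup.mp hw2
      obtain ⟨x, rfl⟩ := hv
      have hu0 : δ k u = 0 := by
        have : u ∈ LinearMap.ker (δ k : V (k + 1) →ₗ[ℂ] V k) := by rw [hacyc k]; exact hu
        exact LinearMap.mem_ker.mp this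
      refine ⟨x, hιLinj k ?_⟩
      rw [hψ x, ← hw, map_add]
      simp only [ContinuousLinearMap.coe_coe]
      rw [hu0, zero_add]
    refine aux_trace_eq_of_intertwine ψ ⟨hinj, hsurjψ⟩ _ _ ?_
    apply LinearMap.ext
    intro x
    apply hιLinj k
    simp only [LinearMap.comp_apply, ContinuousLinearMap.coe_coe]
    rw [hψ]
    have e1 := ContinuousLinearMap.ext_iff.1 (hexpC (k + 1)) x
    simp only [ContinuousLinearMap.comp_apply] at e1
    rw [e1]
    have e2 := ContinuousLinearMap.ext_iff.1 (hexpδ k) (ιC (k + 1) x)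
    simp only [ContinuousLinearMap.comp_apply] at e2
    rw [e2, ← hψ x]
    have e3 := ContinuousLinearMap.ext_iff.1 (hexpL k) (ψ x)
    simp only [ContinuousLinearMap.comp_apply] at e3
    rw [← e3]
  -- put everything together
  have hc0 : LinearMap.trace ℂ (C 0) (exp ((-(t : ℂ)) • DC 0)).toLinearMap = 0 :=
    trace_zero _ _
  have han : LinearMap.trace ℂ (L n) (exp ((-(t : ℂ)) • DL n)).toLinearMap = 0 :=
    trace_zero _ _
  have key := aux_sum_helper n
    (fun k => LinearMap.trace ℂ (L k) (exp ((-(t : ℂ)) • DL k)).toLinearMap)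
    (fun k => LinearMap.trace ℂ (C k) (exp ((-(t : ℂ)) • DC k)).toLinearMap)
    hc0 hshift han
  rw [key]
  apply Finset.sum_congr rfl
  intro k _
  rw [hsplit k]
end

section
/- Let V = ⊕_k V^k be a finite-dimensional graded vector space, d of degree +1 with d² = 0, δ_τ of degree −1 with δ_τ² = 0 a differentiable family with d/dτ δ_τ = θ_τ δ_τ − δ_τ θ_τ for degree-preserving θ_τ, and D_τ = δ_τ d + d δ_τ. Then Σ_k (−1)^k k · tr((d/dτ D_τ^{(k)}) e^{−tD_τ^{(k)}}) = Σ_k (−1)^k tr(θ_τ^{(k)} (d/dt) e^{−tD_τ^{(k)}}), where the superscript (k) denotes restriction to V^k. -/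
open NormedSpace

lemma aux_exp_intertwine {E F : Type} [NormedAddCommGroup E] [NormedSpace ℂ E]
    [FiniteDimensional ℂ E] [NormedAddCommGroup F] [NormedSpace ℂ F] [FiniteDimensional ℂ F]
    (f : E →L[ℂ] F) (A : E →L[ℂ] E) (B : F →L[ℂ] F) (h : B.comp f = f.comp A) :
    (exp B).comp f = f.comp (exp A) := by
  have hpow : ∀ m : ℕ, (B ^ m).comp f = f.comp (A ^ m) := by
    intro m
    induction m with
    | zero => simp [ContinuousLinearMap.one_def]
    | succ m ih =>
      rw [pow_succ, pow_succ, ContinuousLinearMap.mul_def, ContinuousLinearMap.mul_def,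
        ContinuousLinearMap.comp_assoc, h, ← ContinuousLinearMap.comp_assoc, ih,
        ContinuousLinearMap.comp_assoc]
  have h1 := ((ContinuousLinearMap.compL ℂ E F F).flip f).map_tsum
    (expSeries_summable' (𝕂 := ℂ) B)
  have h2 := ((ContinuousLinearMap.compL ℂ E E F) f).map_tsum
    (expSeries_summable' (𝕂 := ℂ) A)
  simp only [map_smul, ContinuousLinearMap.flip_apply, ContinuousLinearMap.compL_apply] at h1 h2
  rw [exp_eq_tsum ℂ, exp_eq_tsum ℂ, h1, h2]
  simp only [hpow]

lemma aux_hasDerivAt_exp {E : Type} [NormedAddCommGroup E] [NormedSpace ℂ E]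
    [FiniteDimensional ℂ E] (A : E →L[ℂ] E) (t : ℝ) :
    HasDerivAt (fun s : ℝ => exp ((-(s : ℂ)) • A)) (-((exp ((-(t : ℂ)) • A)).comp A)) t := by
  have h1 : HasDerivAt (fun u : ℂ => exp (u • A)) (exp ((-(t : ℂ)) • A) * A) (-(t : ℂ)) :=
    hasDerivAt_exp_smul_const A _
  have h2 : HasDerivAt (fun s : ℝ => -(s : ℂ)) (-1 : ℂ) t := by
    simpa [Pi.neg_def] using Complex.ofRealCLM.hasDerivAt.neg
  have h3 := HasDerivAt.scomp (𝕜 := ℝ) t h1 h2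
  refine h3.congr_deriv ?_
  simp [ContinuousLinearMap.mul_def]

lemma aux_trace_cyc {E F : Type} [NormedAddCommGroup E] [NormedSpace ℂ E]
    [FiniteDimensional ℂ E] [NormedAddCommGroup F] [NormedSpace ℂ F] [FiniteDimensional ℂ F]
    (f : E →L[ℂ] F) (g : F →L[ℂ] E) :
    LinearMap.trace ℂ E ((g.comp f).toLinearMap) =
      LinearMap.trace ℂ F ((f.comp g).toLinearMap) := by
  rw [ContinuousLinearMap.toLinearMap_comp, ContinuousLinearMap.toLinearMap_comp]
  exact LinearMap.trace_comp_comm' _ _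

lemma aux_sum_identity (n : ℕ) (A B L : ℕ → ℂ) (hB0 : B 0 = 0) (hAn : A n = 0)
    (hBn : B (n + 1) = 0) (hL0 : L 0 = A 0 - B 1)
    (hLs : ∀ k, L (k + 1) = A (k + 1) + A k - B (k + 2) - B (k + 1)) :
    ∑ k ∈ Finset.range (n + 1), (-1 : ℂ) ^ k * (k : ℂ) * L k
      = ∑ k ∈ Finset.range (n + 1), (-1 : ℂ) ^ k * (-(A k + B k)) := by
  rw [← sub_eq_zero, ← Finset.sum_sub_distrib]
  set G : ℕ → ℂ := fun k => (-1) ^ k * (((k : ℂ) + 1) * A k - (k : ℂ) * B (k + 1)) with hG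
  have h : ∑ k ∈ Finset.range (n + 1),
      ((-1 : ℂ) ^ k * (k : ℂ) * L k - (-1 : ℂ) ^ k * (-(A k + B k))) = G n := by
    rw [Finset.sum_range_succ']
    have h1 : ∀ k, (-1 : ℂ) ^ (k + 1) * ((k + 1 : ℕ) : ℂ) * L (k + 1)
        - (-1 : ℂ) ^ (k + 1) * (-(A (k + 1) + B (k + 1))) = G (k + 1) - G k := by
      intro k
      rw [hLs k]
      simp only [hG]
      push_cast
      ring
    rw [Finset.sum_congr rfl (fun k _ => h1 k), Finset.sum_range_sub]
    rw [hL0]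
    simp only [hG, hB0]
    push_cast
    ring
  rw [h]
  simp only [hG, hAn, hBn]
  ring

lemma aux_unique_add {E : Type} [NormedAddCommGroup E] [NormedSpace ℂ E]
    {f g h : ℝ → E →L[ℂ] E} {a b c : E →L[ℂ] E} {τ : ℝ} (hh : HasDerivAt h c τ)
    (hf : HasDerivAt f a τ) (hg : HasDerivAt g b τ) (e : ∀ s, h s = f s + g s) : c = a + b := by
  have he : h = fun s => f s + g s := funext e
  subst he
  exact hh.unique (hf.add hg)

set_option maxHeartbeats 1000000 in
set_option synthInstance.maxHeartbeats 400000 in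
/-- For a differentiable family of degree `−1` codifferentials `δ_τ` with `δ_τ² = 0` and
`d/dτ δ_τ = [θ_τ, δ_τ]` (an inner variation with degree-preserving `θ_τ`), on a
finite-dimensional graded space with `d` of degree `+1`, `d² = 0`, and
`D_τ = δ_τ d + d δ_τ`, one has
`Σ_k (−1)^k k tr((d/dτ D_τ^{(k)}) e^{−tD_τ^{(k)}}) = Σ_k (−1)^k tr(θ_τ^{(k)} (d/dt) e^{−tD_τ^{(k)}})`,
where `(k)` denotes the restriction to `V^k`. -/
theorem inner_variation_supertrace_identity
    (V : ℕ → Type) [∀ k, NormedAddCommGroup (V k)] [∀ k, NormedSpace ℂ (V k)]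
    [∀ k, FiniteDimensional ℂ (V k)]
    (n : ℕ) (hV : ∀ k, n < k → Subsingleton (V k))
    (d : ∀ k, V k →L[ℂ] V (k + 1))
    (hd2 : ∀ k, (d (k + 1)).comp (d k) = 0)
    (δ : ℝ → ∀ k, V (k + 1) →L[ℂ] V k)
    (hδ2 : ∀ s k, (δ s k).comp (δ s (k + 1)) = 0)
    (θ : ℝ → ∀ k, V k →L[ℂ] V k)
    (τ : ℝ)
    -- inner variation: `δ_τ' = θ_τ δ_τ − δ_τ θ_τ` (with the appropriate degrees)
    (hδ' : ∀ k, HasDerivAt (fun s => δ s k)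
      ((θ τ k).comp (δ τ k) - (δ τ k).comp (θ τ (k + 1))) τ)
    -- the characteristic operators `D_τ = δ_τ d + d δ_τ`, degree by degree
    (D : ℝ → ∀ k, V k →L[ℂ] V k)
    (hD0 : ∀ s, D s 0 = (δ s 0).comp (d 0))
    (hDsucc : ∀ s k, D s (k + 1) = (δ s (k + 1)).comp (d (k + 1)) + (d k).comp (δ s k))
    (D' : ∀ k, V k →L[ℂ] V k)
    (hD' : ∀ k, HasDerivAt (fun s => D s k) (D' k) τ)
    (t : ℝ) :
    ∑ k ∈ Finset.range (n + 1),
        (-1 : ℂ) ^ k * (k : ℂ) *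
          LinearMap.trace ℂ (V k)
            ((D' k).toLinearMap ∘ₗ (exp ((-(t : ℂ)) • D τ k)).toLinearMap)
      = ∑ k ∈ Finset.range (n + 1),
          (-1 : ℂ) ^ k *
            LinearMap.trace ℂ (V k)
              ((θ τ k).toLinearMap ∘ₗ
                (deriv (fun s : ℝ => exp ((-(s : ℂ)) • D τ k)) t).toLinearMap) := by
  classical
  set Ek : ∀ k, V k →L[ℂ] V k := fun k => exp ((-(t : ℂ)) • D τ k) with hEk
  -- pointwise nilpotency
  have hd2' : ∀ k (x : V k), d (k + 1) (d k x) = 0 := fun k x => by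
    simpa using ContinuousLinearMap.ext_iff.1 (hd2 k) x
  have hδ2' : ∀ k (x : V (k + 2)), δ τ k (δ τ (k + 1) x) = 0 := fun k x => by
    simpa using ContinuousLinearMap.ext_iff.1 (hδ2 τ k) x
  -- D intertwines d and δ
  have hDd : ∀ k, (D τ (k + 1)).comp (d k) = (d k).comp (D τ k) := by
    intro k
    ext x
    cases k with
    | zero => simp [hDsucc, hD0, hd2']
    | succ k => simp [hDsucc, hd2']
  have hDδ : ∀ k, (D τ k).comp (δ τ k) = (δ τ k).comp (D τ (k + 1)) := by
    intro k
    ext x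
    cases k with
    | zero => simp [hDsucc, hD0, hδ2']
    | succ k => simp [hDsucc, hδ2']
  -- exp intertwines d and δ, pointwise
  have hEdx : ∀ k (x : V k), Ek (k + 1) (d k x) = d k (Ek k x) := by
    intro k x
    have h := aux_exp_intertwine (d k) ((-(t : ℂ)) • D τ k) ((-(t : ℂ)) • D τ (k + 1))
      (by rw [ContinuousLinearMap.smul_comp, ContinuousLinearMap.comp_smul, hDd])
    simpa only [ContinuousLinearMap.comp_apply] using ContinuousLinearMap.ext_iff.1 h x
  have hEδx : ∀ k (x : V (k + 1)), Ek k (δ τ k x) = δ τ k (Ek (k + 1) x) := by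
    intro k x
    have h := aux_exp_intertwine (δ τ k) ((-(t : ℂ)) • D τ (k + 1)) ((-(t : ℂ)) • D τ k)
      (by rw [ContinuousLinearMap.smul_comp, ContinuousLinearMap.comp_smul, hDδ])
    simpa only [ContinuousLinearMap.comp_apply] using ContinuousLinearMap.ext_iff.1 h x
  -- derivative in t of the exponential
  have hderiv : ∀ k, deriv (fun s : ℝ => exp ((-(s : ℂ)) • D τ k)) t
      = -((Ek k).comp (D τ k)) := fun k => (aux_hasDerivAt_exp (D τ k) t).deriv
  -- formulas for D'
  have hδd' : ∀ k, HasDerivAt (fun s => (δ s k).comp (d k))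
      (((θ τ k).comp (δ τ k) - (δ τ k).comp (θ τ (k + 1))).comp (d k)) τ := by
    intro k
    have h := ((((ContinuousLinearMap.compL ℂ (V k) (V (k + 1)) (V k)).flip
      (d k)).restrictScalars ℝ).hasFDerivAt.comp_hasDerivAt τ (hδ' k))
    simpa [Function.comp_def] using h
  have hdδ' : ∀ k, HasDerivAt (fun s => (d k).comp (δ s k))
      ((d k).comp ((θ τ k).comp (δ τ k) - (δ τ k).comp (θ τ (k + 1)))) τ := by
    intro k
    have h := (((ContinuousLinearMap.compL ℂ (V (k + 1)) (V k) (V (k + 1))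
      (d k)).restrictScalars ℝ).hasFDerivAt.comp_hasDerivAt τ (hδ' k))
    simpa [Function.comp_def] using h
  have hD'0 : D' 0 = ((θ τ 0).comp (δ τ 0) - (δ τ 0).comp (θ τ 1)).comp (d 0) :=
    (hD' 0).unique (by simpa only [hD0] using hδd' 0)
  have hD'succ : ∀ k, D' (k + 1) =
      ((θ τ (k + 1)).comp (δ τ (k + 1)) - (δ τ (k + 1)).comp (θ τ (k + 2))).comp (d (k + 1))
        + (d k).comp ((θ τ k).comp (δ τ k) - (δ τ k).comp (θ τ (k + 1))) := fun k =>
    aux_unique_add (hD' (k + 1)) (hδd' (k + 1)) (hdδ' k) (fun s => hDsucc s k)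
  -- the two families of supertrace summands
  set A : ℕ → ℂ := fun k =>
    LinearMap.trace ℂ (V k) (((θ τ k).comp ((δ τ k).comp ((d k).comp (Ek k)))).toLinearMap)
    with hA
  set B : ℕ → ℂ := fun k =>
    Nat.rec 0 (fun j _ => LinearMap.trace ℂ (V (j + 1))
      (((θ τ (j + 1)).comp ((d j).comp ((δ τ j).comp (Ek (j + 1))))).toLinearMap)) k with hB
  set L : ℕ → ℂ := fun k =>
    Nat.rec (A 0 - B 1) (fun j _ => A (j + 1) + A j - B (j + 2) - B (j + 1)) k with hL
  -- right-hand side terms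
  have hR : ∀ k, LinearMap.trace ℂ (V k) ((θ τ k).toLinearMap ∘ₗ
      (deriv (fun s : ℝ => exp ((-(s : ℂ)) • D τ k)) t).toLinearMap) = -(A k + B k) := by
    intro k
    rw [hderiv k, ← ContinuousLinearMap.toLinearMap_comp]
    cases k with
    | zero =>
      have hc : (θ τ 0).comp (-((Ek 0).comp (D τ 0)))
          = -((θ τ 0).comp ((δ τ 0).comp ((d 0).comp (Ek 0)))) := by
        ext x
        simp [hD0, hEδx, hEdx]
      rw [hc, ContinuousLinearMap.toLinearMap_neg, map_neg]
      have hB0 : B 0 = 0 := rfl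
      rw [hB0, add_zero]
    | succ k =>
      have hc : (θ τ (k + 1)).comp (-((Ek (k + 1)).comp (D τ (k + 1))))
          = -((θ τ (k + 1)).comp ((δ τ (k + 1)).comp ((d (k + 1)).comp (Ek (k + 1))))
              + (θ τ (k + 1)).comp ((d k).comp ((δ τ k).comp (Ek (k + 1))))) := by
        ext x
        simp [hDsucc, hEδx, hEdx]
      rw [hc, ContinuousLinearMap.toLinearMap_neg, map_neg, ContinuousLinearMap.toLinearMap_add, map_add]
  -- left-hand side terms
  have hL0 : LinearMap.trace ℂ (V 0)
      ((D' 0).toLinearMap ∘ₗ (Ek 0).toLinearMap) = A 0 - B 1 := by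
    rw [← ContinuousLinearMap.toLinearMap_comp]
    have hsplit : (D' 0).comp (Ek 0)
        = (θ τ 0).comp ((δ τ 0).comp ((d 0).comp (Ek 0)))
          - (δ τ 0).comp ((θ τ 1).comp ((d 0).comp (Ek 0))) := by
      rw [hD'0]
      simp only [ContinuousLinearMap.sub_comp, ContinuousLinearMap.comp_assoc]
    rw [hsplit, ContinuousLinearMap.toLinearMap_sub, map_sub]
    have hcyc : LinearMap.trace ℂ (V 0)
        (((δ τ 0).comp ((θ τ 1).comp ((d 0).comp (Ek 0)))).toLinearMap) = B 1 := by
      rw [aux_trace_cyc ((θ τ 1).comp ((d 0).comp (Ek 0))) (δ τ 0)]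
      have he : ((θ τ 1).comp ((d 0).comp (Ek 0))).comp (δ τ 0)
          = (θ τ 1).comp ((d 0).comp ((δ τ 0).comp (Ek 1))) := by
        ext x; simp [hEδx]
      rw [he]
      rfl
    rw [hcyc]
  have hLsucc : ∀ k, LinearMap.trace ℂ (V (k + 1))
      ((D' (k + 1)).toLinearMap ∘ₗ (Ek (k + 1)).toLinearMap)
      = A (k + 1) + A k - B (k + 2) - B (k + 1) := by
    intro k
    rw [← ContinuousLinearMap.toLinearMap_comp]
    have hsplit : (D' (k + 1)).comp (Ek (k + 1))
        = (θ τ (k + 1)).comp ((δ τ (k + 1)).comp ((d (k + 1)).comp (Ek (k + 1))))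
          - (δ τ (k + 1)).comp ((θ τ (k + 2)).comp ((d (k + 1)).comp (Ek (k + 1))))
          + ((d k).comp ((θ τ k).comp ((δ τ k).comp (Ek (k + 1))))
            - (d k).comp ((δ τ k).comp ((θ τ (k + 1)).comp (Ek (k + 1))))) := by
      rw [hD'succ]
      simp only [ContinuousLinearMap.add_comp, ContinuousLinearMap.sub_comp,
        ContinuousLinearMap.comp_sub, ContinuousLinearMap.comp_assoc]
    rw [hsplit, ContinuousLinearMap.toLinearMap_add, map_add, ContinuousLinearMap.toLinearMap_sub, map_sub,
      ContinuousLinearMap.toLinearMap_sub, map_sub]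
    have hT2 : LinearMap.trace ℂ (V (k + 1))
        (((δ τ (k + 1)).comp ((θ τ (k + 2)).comp ((d (k + 1)).comp (Ek (k + 1))))).toLinearMap)
        = B (k + 2) := by
      rw [aux_trace_cyc ((θ τ (k + 2)).comp ((d (k + 1)).comp (Ek (k + 1)))) (δ τ (k + 1))]
      have he : ((θ τ (k + 2)).comp ((d (k + 1)).comp (Ek (k + 1)))).comp (δ τ (k + 1))
          = (θ τ (k + 2)).comp ((d (k + 1)).comp ((δ τ (k + 1)).comp (Ek (k + 2)))) := by
        ext x; simp [hEδx]
      rw [he]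
    have hT3 : LinearMap.trace ℂ (V (k + 1))
        (((d k).comp ((θ τ k).comp ((δ τ k).comp (Ek (k + 1))))).toLinearMap) = A k := by
      rw [aux_trace_cyc ((θ τ k).comp ((δ τ k).comp (Ek (k + 1)))) (d k)]
      have he : ((θ τ k).comp ((δ τ k).comp (Ek (k + 1)))).comp (d k)
          = (θ τ k).comp ((δ τ k).comp ((d k).comp (Ek k))) := by
        ext x; simp [hEδx, hEdx]
      rw [he]
    have hT4 : LinearMap.trace ℂ (V (k + 1))
        (((d k).comp ((δ τ k).comp ((θ τ (k + 1)).comp (Ek (k + 1))))).toLinearMap)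
        = B (k + 1) := by
      rw [aux_trace_cyc ((δ τ k).comp ((θ τ (k + 1)).comp (Ek (k + 1)))) (d k)]
      have he : ((δ τ k).comp ((θ τ (k + 1)).comp (Ek (k + 1)))).comp (d k)
          = (δ τ k).comp (((θ τ (k + 1)).comp ((d k).comp (Ek k)))) := by
        ext x; simp [hEdx]
      rw [he, aux_trace_cyc ((θ τ (k + 1)).comp ((d k).comp (Ek k))) (δ τ k)]
      have he2 : ((θ τ (k + 1)).comp ((d k).comp (Ek k))).comp (δ τ k)
          = (θ τ (k + 1)).comp ((d k).comp ((δ τ k).comp (Ek (k + 1)))) := by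
        ext x; simp [hEδx]
      rw [he2]
    rw [hT2, hT3, hT4]
    have hT1 : LinearMap.trace ℂ (V (k + 1))
        (((θ τ (k + 1)).comp ((δ τ (k + 1)).comp ((d (k + 1)).comp (Ek (k + 1))))).toLinearMap)
        = A (k + 1) := rfl
    rw [hT1]
    ring
  -- vanishing at the boundary
  haveI hVn1 : Subsingleton (V (n + 1)) := hV (n + 1) (Nat.lt_succ_self n)
  have hdn : d n = 0 := by ext x; exact Subsingleton.elim _ _
  have hAn : A n = 0 := by
    have hc : (θ τ n).comp ((δ τ n).comp ((d n).comp (Ek n))) = 0 := by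
      rw [hdn]; ext x; simp
    simp only [hA, hc, ContinuousLinearMap.toLinearMap_zero, map_zero]
  have hBn1 : B (n + 1) = 0 := by
    have hc : (θ τ (n + 1)).comp ((d n).comp ((δ τ n).comp (Ek (n + 1)))) = 0 := by
      ext x; exact Subsingleton.elim _ _
    show LinearMap.trace ℂ (V (n + 1))
      (((θ τ (n + 1)).comp ((d n).comp ((δ τ n).comp (Ek (n + 1))))).toLinearMap) = 0
    rw [hc, ContinuousLinearMap.toLinearMap_zero, map_zero]
  -- put everything together
  have hLterm : ∀ k, LinearMap.trace ℂ (V k)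
      ((D' k).toLinearMap ∘ₗ (exp ((-(t : ℂ)) • D τ k)).toLinearMap) = L k := by
    intro k
    cases k with
    | zero => exact hL0
    | succ k => exact hLsucc k
  calc ∑ k ∈ Finset.range (n + 1), (-1 : ℂ) ^ k * (k : ℂ) *
          LinearMap.trace ℂ (V k)
            ((D' k).toLinearMap ∘ₗ (exp ((-(t : ℂ)) • D τ k)).toLinearMap)
      = ∑ k ∈ Finset.range (n + 1), (-1 : ℂ) ^ k * (k : ℂ) * L k :=
        Finset.sum_congr rfl (fun k _ => by rw [hLterm k])
    _ = ∑ k ∈ Finset.range (n + 1), (-1 : ℂ) ^ k * (-(A k + B k)) :=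
        aux_sum_identity n A B L rfl hAn hBn1 rfl (fun k => rfl)
    _ = ∑ k ∈ Finset.range (n + 1), (-1 : ℂ) ^ k *
          LinearMap.trace ℂ (V k) ((θ τ k).toLinearMap ∘ₗ
            (deriv (fun s : ℝ => exp ((-(s : ℂ)) • D τ k)) t).toLinearMap) :=
        Finset.sum_congr rfl (fun k _ => by rw [hR k])
end

section
/- For a differentiable family of matrices τ ↦ D_τ on a finite-dimensional vector space, d/dτ e^{−tD_τ} = −∫₀ᵗ e^{−(t−u)D_τ} (d/dτ D_τ) e^{−uD_τ} du (Duhamel's formula). -/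
open NormedSpace MeasureTheory intervalIntegral
open scoped Topology

namespace DuhamelAux

variable {V : Type*} [NormedAddCommGroup V] [NormedSpace ℂ V] [FiniteDimensional ℂ V]

noncomputable instance instNormedAlgebraRatCLM : NormedAlgebra ℚ (V →L[ℂ] V) :=
  NormedAlgebra.restrictScalars ℚ ℂ _

lemma hasDerivAt_exp_smul (A : V →L[ℂ] V) (u : ℝ) :
    HasDerivAt (fun v : ℝ => exp (v • A)) (exp (u • A) * A) u := by
  exact hasDerivAt_exp_smul_const A u

lemma norm_exp_le (A : V →L[ℂ] V) : ‖exp A‖ ≤ Real.exp ‖A‖ := by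
  rw [exp_eq_tsum ℂ]
  refine tsum_of_norm_bounded (g := fun n => ‖A‖ ^ n / (n.factorial : ℝ)) ?_ ?_
  · rw [Real.exp_eq_exp_ℝ]
    exact expSeries_div_hasSum_exp ‖A‖
  · intro n
    rw [norm_smul, norm_inv]
    rw [div_eq_inv_mul]
    have h1 : ‖((n.factorial : ℂ))‖ = (n.factorial : ℝ) := by simp
    rw [h1]
    refine mul_le_mul_of_nonneg_left ?_ (by positivity)
    cases n with
    | zero => simp only [pow_zero]; exact (ContinuousLinearMap.norm_id_le : ‖(1 : V →L[ℂ] V)‖ ≤ 1)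
    | succ n => exact norm_pow_le' A n.succ_pos

lemma exp_smul_sub (A : V →L[ℂ] V) (v t : ℝ) :
    exp ((v - t) • A) = exp (v • A) * exp ((-t) • A) := by
  rw [sub_smul, sub_eq_add_neg, ← neg_smul]
  exact exp_add_of_commute (((Commute.refl A).smul_left v).smul_right (-t))

/-- derivative of `u ↦ exp(-(t-u)•A)` -/
lemma deriv_left (A : V →L[ℂ] V) (t u : ℝ) :
    HasDerivAt (fun u : ℝ => exp (-(t - u) • A)) (exp (-(t - u) • A) * A) u := by
  have h : HasDerivAt (fun v : ℝ => exp (v • A) * exp ((-t) • A))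
      (exp (u • A) * A * exp ((-t) • A)) u :=
    (hasDerivAt_exp_smul A u).mul_const _
  have hfun : (fun u : ℝ => exp (-(t - u) • A)) =
      fun v : ℝ => exp (v • A) * exp ((-t) • A) := by
    funext v
    rw [neg_sub, exp_smul_sub]
  rw [hfun]
  have : exp (-(t - u) • A) * A = exp (u • A) * A * exp ((-t) • A) := by
    rw [neg_sub, exp_smul_sub]
    rw [mul_assoc, mul_assoc]
    congr 1
    exact ((Commute.refl A).smul_right (-t)).exp_right |>.symm.eq
  rw [this]
  exact h

/-- derivative of `u ↦ exp(-u•B)` -/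
lemma deriv_right (B : V →L[ℂ] V) (u : ℝ) :
    HasDerivAt (fun u : ℝ => exp (-u • B)) (-(exp (-u • B) * B)) u := by
  have h : HasDerivAt (fun v : ℝ => exp (v • (-B))) (exp (u • (-B)) * (-B)) u :=
    hasDerivAt_exp_smul (-B) u
  simp only [smul_neg, ← neg_smul, mul_neg] at h
  exact h

/-- The key identity. -/
lemma key_identity (A B : V →L[ℂ] V) (t : ℝ) :
    exp (-t • A) - exp (-t • B)
      = -∫ u in (0:ℝ)..t, exp (-(t - u) • A) * (A - B) * exp (-u • B) := by
  have hg : ∀ u ∈ Set.uIcc (0:ℝ) t,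
      HasDerivAt (fun u : ℝ => exp (-(t - u) • A) * exp (-u • B))
        (exp (-(t - u) • A) * (A - B) * exp (-u • B)) u := by
    intro u _
    have h := (deriv_left A t u).mul (deriv_right B u)
    have heq : exp (-(t - u) • A) * A * exp (-u • B)
        + exp (-(t - u) • A) * -(exp (-u • B) * B)
        = exp (-(t - u) • A) * (A - B) * exp (-u • B) := by
      have hc : exp (-u • B) * B = B * exp (-u • B) :=
        (((Commute.refl B).smul_left (-u)).exp_left).eq
      rw [hc, mul_sub, sub_mul, mul_neg, ← mul_assoc]
      abel
    rw [← heq]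
    exact h
  have hcont : Continuous fun u : ℝ => exp (-(t - u) • A) * (A - B) * exp (-u • B) := by
    apply Continuous.mul
    apply Continuous.mul
    · exact exp_continuous.comp ((continuous_const.sub continuous_id).neg.smul continuous_const)
    · exact continuous_const
    · exact exp_continuous.comp ((continuous_id.neg).smul continuous_const)
  have := integral_eq_sub_of_hasDerivAt hg (hcont.intervalIntegrable 0 t)
  simp only [sub_self, neg_zero, zero_smul, exp_zero, one_mul, mul_one, sub_zero] at this
  rw [this]
  abel

lemma abs_le_of_uIoc {t u : ℝ} (hu : u ∈ Set.uIoc 0 t) : |u| ≤ |t| ∧ |t - u| ≤ |t| := by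
  have hmin : min 0 t < u := hu.1
  have hmax : u ≤ max 0 t := hu.2
  rcases le_total 0 t with h | h
  · rw [min_eq_left h] at hmin
    rw [max_eq_right h] at hmax
    rw [abs_of_nonneg h]
    exact ⟨abs_le.2 ⟨by linarith, hmax⟩, abs_le.2 ⟨by linarith, by linarith⟩⟩
  · rw [min_eq_right h] at hmin
    rw [max_eq_left h] at hmax
    rw [abs_of_nonpos h]
    exact ⟨abs_le.2 ⟨by linarith, by linarith⟩, abs_le.2 ⟨by linarith, by linarith⟩⟩

end DuhamelAux

open DuhamelAux in
set_option maxHeartbeats 1000000 in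
/-- Duhamel's formula: for a continuously differentiable family of operators `τ ↦ D_τ`
on a finite-dimensional space,
`d/dτ e^{−tD_τ} = −∫₀ᵗ e^{−(t−u)D_τ} (d/dτ D_τ) e^{−uD_τ} du`. -/
theorem duhamel_formula
    {V : Type*} [NormedAddCommGroup V] [NormedSpace ℂ V] [FiniteDimensional ℂ V]
    (D D' : ℝ → V →L[ℂ] V)
    (hD : ∀ τ, HasDerivAt D (D' τ) τ)
    (hD' : Continuous D')
    (t τ : ℝ) :
    HasDerivAt (fun s => exp (-t • D s))
      (-∫ u in (0:ℝ)..t, exp (-(t - u) • D τ) * D' τ * exp (-u • D τ)) τ := by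
  rw [hasDerivAt_iff_tendsto_slope]
  have hslopeD : Filter.Tendsto (slope D τ) (𝓝[≠] τ) (𝓝 (D' τ)) :=
    hasDerivAt_iff_tendsto_slope.mp (hD τ)
  -- rewrite the slope of the exponential using the key identity
  have key : ∀ s : ℝ, slope (fun s => exp (-t • D s)) τ s
      = -∫ u in (0:ℝ)..t, exp (-(t - u) • D s) * slope D τ s * exp (-u • D τ) := by
    intro s
    rw [slope_def_module]
    rw [key_identity (D s) (D τ) t]
    rw [smul_neg, ← intervalIntegral.integral_smul]
    congr 1
    refine intervalIntegral.integral_congr fun u _ => ?_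
    rw [slope_def_module, mul_smul_comm, smul_mul_assoc]
  -- dominated convergence
  have hmain : Filter.Tendsto
      (fun s => ∫ u in (0:ℝ)..t, exp (-(t - u) • D s) * slope D τ s * exp (-u • D τ))
      (𝓝[≠] τ)
      (𝓝 (∫ u in (0:ℝ)..t, exp (-(t - u) • D τ) * D' τ * exp (-u • D τ))) := by
    have hA : ∀ᶠ s in 𝓝[≠] τ, ‖D s‖ < ‖D τ‖ + 1 :=
      (((hD τ).continuousAt.norm).eventually_lt_const (by linarith)).filter_mono
        nhdsWithin_le_nhds
    have hS : ∀ᶠ s in 𝓝[≠] τ, ‖slope D τ s‖ < ‖D' τ‖ + 1 :=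
      (hslopeD.norm).eventually_lt_const (by linarith)
    refine intervalIntegral.tendsto_integral_filter_of_dominated_convergence
      (fun _ => (Real.exp (|t| * (‖D τ‖ + 1)) * (‖D' τ‖ + 1)) * Real.exp (|t| * ‖D τ‖))
      ?_ ?_ ?_ ?_
    · refine Filter.Eventually.of_forall fun s => ?_
      refine Continuous.aestronglyMeasurable ?_
      refine Continuous.mul (Continuous.mul ?_ continuous_const) ?_
      · exact exp_continuous.comp
          (((continuous_const.sub continuous_id).neg).smul continuous_const)
      · exact exp_continuous.comp ((continuous_id.neg).smul continuous_const)
    · filter_upwards [hA, hS] with s hAs hSs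
      refine MeasureTheory.ae_of_all _ fun u hu => ?_
      obtain ⟨hu1, hu2⟩ := abs_le_of_uIoc hu
      have h1 : ‖exp (-(t - u) • D s)‖ ≤ Real.exp (|t| * (‖D τ‖ + 1)) := by
        refine (norm_exp_le _).trans ?_
        rw [Real.exp_le_exp]
        have hns := norm_smul (-(t - u)) (D s)
        rw [hns, Real.norm_eq_abs, abs_neg]
        exact mul_le_mul hu2 hAs.le (norm_nonneg _) (abs_nonneg _)
      have h2 : ‖exp (-u • D τ)‖ ≤ Real.exp (|t| * ‖D τ‖) := by
        refine (norm_exp_le _).trans ?_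
        rw [Real.exp_le_exp]
        have hns := norm_smul (-u) (D τ)
        rw [hns, Real.norm_eq_abs, abs_neg]
        exact mul_le_mul_of_nonneg_right hu1 (norm_nonneg _)
      calc ‖exp (-(t - u) • D s) * slope D τ s * exp (-u • D τ)‖
          ≤ ‖exp (-(t - u) • D s) * slope D τ s‖ * ‖exp (-u • D τ)‖ := norm_mul_le _ _
        _ ≤ (‖exp (-(t - u) • D s)‖ * ‖slope D τ s‖) * ‖exp (-u • D τ)‖ := by
            gcongr
            exact norm_mul_le _ _
        _ ≤ (Real.exp (|t| * (‖D τ‖ + 1)) * (‖D' τ‖ + 1)) * Real.exp (|t| * ‖D τ‖) := by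
            gcongr
    · exact intervalIntegrable_const
    · refine MeasureTheory.ae_of_all _ fun u _ => ?_
      have t1 : Filter.Tendsto (fun s => exp (-(t - u) • D s)) (𝓝[≠] τ)
          (𝓝 (exp (-(t - u) • D τ))) := by
        have hc : ContinuousAt (fun s => exp (-(t - u) • D s)) τ :=
          (exp_continuous.continuousAt).comp ((hD τ).continuousAt.const_smul (-(t - u)))
        exact hc.tendsto.mono_left nhdsWithin_le_nhds
      exact (t1.mul hslopeD).mul tendsto_const_nhds
  refine (hmain.neg).congr fun s => (key s).symm
end
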